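/- If H is an open subgroup of π₁^{l}(X,x₀), then X is a strong H-SLT space. -/

import Mathlib

open CategoryTheory unitInterval
open scoped Topology

attribute [local instance] Path.Homotopic.setoid

noncomputable section

/-- The homotopy class of a loop as an element of the fundamental group. -/
def loopClass {X : Type*} [TopologicalSpace X] {x : X} (γ : Path x x) :
    FundamentalGroup X x :=
  FundamentalGroup.fromPath (⟦γ⟧ : Path.Homotopic.Quotient x x)

variable {X : Type*} [TopologicalSpace X]

/-- The Spanier group of a family of subsets of `X`, based at `x`: the subgroup generated by
classes `[α∗β∗α⁻¹]` where `α` is a path from `x` and `β` is a loop inside a member of `𝒰`. -/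
def spanierGroupAt (x : X) (𝒰 : Set (Set X)) : Subgroup (FundamentalGroup X x) :=
  Subgroup.closure {g | ∃ (y : X) (α : Path x y) (β : Path y y) (U : Set X),
    U ∈ 𝒰 ∧ (∀ t, β t ∈ U) ∧ g = loopClass (α.trans (β.trans α.symm))}

/-- `𝒰` is an open cover of `X`. -/
def IsOpenCover (𝒰 : Set (Set X)) : Prop := (∀ U ∈ 𝒰, IsOpen U) ∧ ⋃₀ 𝒰 = Set.univ

/-- `X` is a strong `H`-SLT space at `x₀`: for every `x ∈ X` and every open neighborhood `U`
of `x₀` there is an open neighborhood `V` of `x` such that for every loop `β` in `V` based at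
`x` and every path `α` from `x₀` to `x` there is a loop `λ` in `U` based at `x₀` with
`[α∗β∗α⁻¹∗λ⁻¹] ∈ H`. -/
def StrongHSLTAt (x₀ : X) (H : Subgroup (FundamentalGroup X x₀)) : Prop :=
  ∀ (x : X) (U : Set X), IsOpen U → x₀ ∈ U →
    ∃ V : Set X, IsOpen V ∧ x ∈ V ∧
      ∀ (β : Path x x), (∀ t, β t ∈ V) → ∀ (α : Path x₀ x),
        ∃ lam : Path x₀ x₀, (∀ t, lam t ∈ U) ∧
          loopClass (α.trans (β.trans α.symm)) * (loopClass lam)⁻¹ ∈ H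

/-- The conjugate subgroup `[δ⁻¹ H δ]` of the fundamental group at the endpoint of `δ`. -/
def conjSubgroup {x₀ x : X} (δ : Path x₀ x) (H : Subgroup (FundamentalGroup X x₀)) :
    Subgroup (FundamentalGroup X x) :=
  H.map (FundamentalGroup.fundamentalGroupMulEquivOfPath δ).toMonoidHom

/-- `X` is a strong `H`-SLT space: for every `x ∈ X` and every path `δ` from `x₀` to `x`,
`X` is a strong `[δ⁻¹Hδ]`-SLT space at `x`. -/
def StrongHSLT (x₀ : X) (H : Subgroup (FundamentalGroup X x₀)) : Prop :=
  ∀ (x : X) (δ : Path x₀ x), StrongHSLTAt x (conjSubgroup δ H)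

/-- The whisker topology on the fundamental group at `x₀`: the subspace topology inherited
from the whisker topology on the universal path space. -/
def whiskerPi1 (x₀ : X) : TopologicalSpace (FundamentalGroup X x₀) :=
  TopologicalSpace.generateFrom
    {S | ∃ (x : X) (α : Path x₀ x) (U : Set X), IsOpen U ∧ x ∈ U ∧
      S = {g | ∃ lam : Path x x₀, (∀ t, lam t ∈ U) ∧ g = loopClass (α.trans lam)}}

/-- The lasso topology on the fundamental group at `x₀`: the subspace topology inherited
from the lasso topology on the universal path space. -/
def lassoPi1 (x₀ : X) : TopologicalSpace (FundamentalGroup X x₀) :=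
  TopologicalSpace.generateFrom
    {S | ∃ (x : X) (α : Path x₀ x) (𝒰 : Set (Set X)) (U : Set X),
      IsOpenCover 𝒰 ∧ U ∈ 𝒰 ∧ x ∈ U ∧
      S = {g | ∃ (γ : Path x x) (δ : Path x x₀), loopClass γ ∈ spanierGroupAt x 𝒰 ∧
            (∀ t, δ t ∈ U) ∧ g = loopClass ((α.trans γ).trans δ)}}

def pq {x y : X} (p : Path x y) : FundamentalGroupoid.mk x ⟶ FundamentalGroupoid.mk y := ⟦p⟧

lemma pq_trans {x y z : X} (p : Path x y) (q : Path y z) : pq (p.trans q) = pq p ≫ pq q :=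
  Path.Homotopic.Quotient.mk_trans p q

lemma pq_symm {x y : X} (p : Path x y) : pq p.symm = CategoryTheory.inv (pq p) := by
  rw [← Groupoid.inv_eq_inv]; rfl

lemma loopClass_hom {x : X} (γ : Path x x) : (loopClass γ) = pq γ := rfl

lemma loopClass_eq_iff {x : X} (γ₁ γ₂ : Path x x) : loopClass γ₁ = loopClass γ₂ ↔ pq γ₁ = pq γ₂ :=
  ⟨fun h => h, fun h => h⟩

lemma loopClass_refl (x : X) : loopClass (Path.refl x) = 1 := rfl

lemma loopClass_trans {x : X} (a b : Path x x) :
    loopClass (a.trans b) = loopClass b * loopClass a := by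
  show pq (a.trans b) = (loopClass b * loopClass a)
  rw [pq_trans]; rfl

lemma equiv_loopClass {x₀ x₁ : X} (p : Path x₀ x₁) (γ : Path x₀ x₀) :
    FundamentalGroup.fundamentalGroupMulEquivOfPath p (loopClass γ)
      = loopClass ((p.symm.trans γ).trans p) := by
  show Groupoid.inv (pq p) ≫ pq γ ≫ pq p = pq ((p.symm.trans γ).trans p)
  rw [Groupoid.inv_eq_inv]
  simp [pq_trans, pq_symm]

lemma equiv_conj {x₀ x₁ z : X} (p : Path x₀ x₁) (a : Path x₀ z) (β : Path z z) :
    FundamentalGroup.fundamentalGroupMulEquivOfPath p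
        (loopClass (a.trans (β.trans a.symm)))
      = loopClass ((p.symm.trans a).trans (β.trans (p.symm.trans a).symm)) := by
  rw [equiv_loopClass, loopClass_eq_iff]
  simp [pq_trans, pq_symm]

lemma mapSpanier {x₀ x₁ : X} (p : Path x₀ x₁) (𝒰 : Set (Set X)) :
    (spanierGroupAt x₀ 𝒰).map
        (FundamentalGroup.fundamentalGroupMulEquivOfPath p).toMonoidHom
      ≤ spanierGroupAt x₁ 𝒰 := by
  rw [Subgroup.map_le_iff_le_comap, spanierGroupAt, Subgroup.closure_le]
  rintro g ⟨y, a, β, U, hU, hβ, rfl⟩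
  show (FundamentalGroup.fundamentalGroupMulEquivOfPath p).toMonoidHom _ ∈ spanierGroupAt x₁ 𝒰
  rw [MulEquiv.coe_toMonoidHom, equiv_conj]
  exact Subgroup.subset_closure ⟨y, p.symm.trans a, β, U, hU, hβ, rfl⟩

lemma spanier_le_map {x₀ x₁ : X} (p : Path x₀ x₁) (𝒰 : Set (Set X)) :
    spanierGroupAt x₁ 𝒰 ≤ (spanierGroupAt x₀ 𝒰).map
      (FundamentalGroup.fundamentalGroupMulEquivOfPath p).toMonoidHom := by
  intro g hg
  refine ⟨(FundamentalGroup.fundamentalGroupMulEquivOfPath p).symm g, ?_, by simp⟩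
  have hsymm : (FundamentalGroup.fundamentalGroupMulEquivOfPath p).symm
      = FundamentalGroup.fundamentalGroupMulEquivOfPath p.symm := by
    ext g
    show pq p ≫ g ≫ Groupoid.inv (pq p)
      = Groupoid.inv (pq p.symm) ≫ g ≫ pq p.symm
    rw [Groupoid.inv_eq_inv, Groupoid.inv_eq_inv]
    simp [pq_symm]
  rw [hsymm]
  exact mapSpanier p.symm 𝒰 ⟨g, hg, rfl⟩

lemma spanier_mono {x : X} {𝒰 𝒱 : Set (Set X)}
    (h : ∀ V ∈ 𝒰, ∃ W ∈ 𝒱, V ⊆ W) : spanierGroupAt x 𝒰 ≤ spanierGroupAt x 𝒱 := by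
  rw [spanierGroupAt, Subgroup.closure_le]
  rintro g ⟨y, a, β, U, hU, hβ, rfl⟩
  obtain ⟨W, hW, hUW⟩ := h U hU
  exact Subgroup.subset_closure ⟨y, a, β, W, hW, fun t => hUW (hβ t), rfl⟩

/-- Lemma A: a lasso-basic set containing `1` contains a full Spanier group. -/
lemma spanier_subset_of_one_mem (x₀ : X) {S : Set (FundamentalGroup X x₀)}
    (hS : ∃ (x : X) (α : Path x₀ x) (𝒰 : Set (Set X)) (U : Set X),
      IsOpenCover 𝒰 ∧ U ∈ 𝒰 ∧ x ∈ U ∧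
      S = {g | ∃ (γ : Path x x) (δ : Path x x₀), loopClass γ ∈ spanierGroupAt x 𝒰 ∧
            (∀ t, δ t ∈ U) ∧ g = loopClass ((α.trans γ).trans δ)})
    (h1 : (1 : FundamentalGroup X x₀) ∈ S) :
    ∃ 𝒰, IsOpenCover 𝒰 ∧ (spanierGroupAt x₀ 𝒰 : Set (FundamentalGroup X x₀)) ⊆ S := by
  obtain ⟨x, α, 𝒰, U, hcov, hU, hxU, rfl⟩ := hS
  obtain ⟨γ₀, δ₀, hγ₀, hδ₀, hone⟩ := h1
  refine ⟨𝒰, hcov, fun g hg => ?_⟩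
  obtain ⟨l, hl⟩ := Quotient.exists_rep (show Quotient (Path.Homotopic.setoid x₀ x₀) from g)
  have hgl : g = loopClass l := hl.symm
  have h1' : pq α ≫ pq γ₀ ≫ pq δ₀ = 𝟙 (FundamentalGroupoid.mk x₀) := by
    have h := hone
    rw [loopClass_hom, pq_trans, pq_trans, Category.assoc] at h
    exact h.symm
  refine ⟨γ₀.trans ((δ₀.trans l).trans δ₀.symm), δ₀, ?_, hδ₀, ?_⟩
  · rw [loopClass_trans]
    refine mul_mem ?_ hγ₀
    have heq : loopClass ((δ₀.trans l).trans δ₀.symm)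
        = FundamentalGroup.fundamentalGroupMulEquivOfPath δ₀.symm (loopClass l) := by
      rw [equiv_loopClass, loopClass_eq_iff]
      simp [pq_trans, pq_symm]
    rw [heq]
    exact mapSpanier δ₀.symm 𝒰 ⟨loopClass l, hgl ▸ hg, rfl⟩
  · rw [hgl, loopClass_eq_iff]
    have hassoc : pq α ≫ pq γ₀ ≫ pq δ₀ ≫ pq l = (pq α ≫ pq γ₀ ≫ pq δ₀) ≫ pq l := by
      simp [Category.assoc]
    simp only [pq_trans, pq_symm, Category.assoc, IsIso.inv_hom_id, Category.comp_id]
    rw [hassoc, h1', Category.id_comp]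

theorem strongHSLT_of_lasso_open (x₀ : X) (H : Subgroup (FundamentalGroup X x₀))
    (hopen : IsOpen[lassoPi1 x₀] (H : Set (FundamentalGroup X x₀))) :
    StrongHSLT x₀ H := by
  have hbasis := @TopologicalSpace.isTopologicalBasis_of_subbasis _ (lassoPi1 x₀) _ rfl
  obtain ⟨B, ⟨f, ⟨hfin, hfsub⟩, rfl⟩, h1B, hBH⟩ :=
    @TopologicalSpace.IsTopologicalBasis.exists_subset_of_mem_open _ (lassoPi1 x₀) _ hbasis _ _
      H.one_mem hopen
  have key : ∀ fs : Set (Set (FundamentalGroup X x₀)), fs.Finite → fs ⊆ f →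
      ∃ 𝒰, IsOpenCover 𝒰 ∧
        ∀ S ∈ fs, (spanierGroupAt x₀ 𝒰 : Set (FundamentalGroup X x₀)) ⊆ S := by
    intro fs hfsfin
    refine Set.Finite.induction_on
      (motive := fun fs _ => fs ⊆ f → ∃ 𝒰, IsOpenCover 𝒰 ∧
        ∀ S ∈ fs, (spanierGroupAt x₀ 𝒰 : Set (FundamentalGroup X x₀)) ⊆ S)
      _ hfsfin (fun _ => ⟨{Set.univ}, ⟨by simp, by simp⟩, by simp⟩) ?_
    intro a s ha hsfin ih hsub
    obtain ⟨𝒰₁, hc₁, hs₁⟩ := spanier_subset_of_one_mem x₀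
      (hfsub (hsub (Set.mem_insert a s)))
      (Set.mem_sInter.mp h1B a (hsub (Set.mem_insert a s)))
    obtain ⟨𝒰₂, hc₂, hs₂⟩ := ih (fun S hS => hsub (Set.mem_insert_of_mem _ hS))
    refine ⟨{W | ∃ V₁ ∈ 𝒰₁, ∃ V₂ ∈ 𝒰₂, W = V₁ ∩ V₂}, ⟨?_, ?_⟩, ?_⟩
    · rintro W ⟨V₁, h₁, V₂, h₂, rfl⟩
      exact (hc₁.1 V₁ h₁).inter (hc₂.1 V₂ h₂)
    · rw [Set.sUnion_eq_univ_iff]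
      intro z
      obtain ⟨V₁, h₁, hz₁⟩ := Set.sUnion_eq_univ_iff.mp hc₁.2 z
      obtain ⟨V₂, h₂, hz₂⟩ := Set.sUnion_eq_univ_iff.mp hc₂.2 z
      exact ⟨V₁ ∩ V₂, ⟨V₁, h₁, V₂, h₂, rfl⟩, hz₁, hz₂⟩
    · intro S hS
      have href₁ : ∀ V ∈ {W | ∃ V₁ ∈ 𝒰₁, ∃ V₂ ∈ 𝒰₂, W = V₁ ∩ V₂}, ∃ W ∈ 𝒰₁, V ⊆ W := by
        rintro V ⟨V₁, h₁, V₂, h₂, rfl⟩; exact ⟨V₁, h₁, Set.inter_subset_left⟩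
      have href₂ : ∀ V ∈ {W | ∃ V₁ ∈ 𝒰₁, ∃ V₂ ∈ 𝒰₂, W = V₁ ∩ V₂}, ∃ W ∈ 𝒰₂, V ⊆ W := by
        rintro V ⟨V₁, h₁, V₂, h₂, rfl⟩; exact ⟨V₂, h₂, Set.inter_subset_right⟩
      rcases hS with rfl | hS
      · exact fun g hg => hs₁ (spanier_mono href₁ hg)
      · exact fun g hg => hs₂ S hS (spanier_mono href₂ hg)
  obtain ⟨𝒰, hcov, hsub⟩ := key f hfin le_rfl
  have hSpH : spanierGroupAt x₀ 𝒰 ≤ H := fun g hg =>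
    hBH (Set.mem_sInter.mpr fun S hS => hsub S hS hg)
  intro x δ y U hUo hxU
  obtain ⟨W, hW𝒰, hyW⟩ := Set.sUnion_eq_univ_iff.mp hcov.2 y
  refine ⟨W, hcov.1 W hW𝒰, hyW, fun β hβ α => ⟨Path.refl x, fun _ => hxU, ?_⟩⟩
  rw [loopClass_refl, inv_one, mul_one]
  have hgen : loopClass (α.trans (β.trans α.symm)) ∈ spanierGroupAt x 𝒰 :=
    Subgroup.subset_closure ⟨y, α, β, W, hW𝒰, hβ, rfl⟩
  exact Subgroup.map_mono hSpH (spanier_le_map δ 𝒰 hgen)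

end
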